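/- (Trivial-extension form of Theorem 1 for odd complement.) Let d ≥ 3 be odd and let u : ℝ × ℝ^d → ℝ^d be a smooth real Schur flow satisfying the barotropic Euler equation with smooth potential Π. Define the last vorticity component Ω_last by (Ω_last)_{jd} = −(Ω_last)_{dj} = ∂_j u_d for j < d, and (Ω_last)_{jk} = 0 when both j < d and k < d. Then Ω_last is Lie-transported by u: for all j, k, ∂_t (Ω_last)_{jk} + Σ_{m=1}^d ( u_m ∂_m (Ω_last)_{jk} + (Ω_last)_{mk} ∂_j u_m + (Ω_last)_{jm} ∂_k u_m ) = 0. -/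

import Mathlib

section helpers
variable {E : Type*} [NormedAddCommGroup E] [NormedSpace ℝ E]

/-- directional-derivative application is smooth -/
lemma contDiff_dapply {f : E → ℝ} (hf : ContDiff ℝ (⊤ : ℕ∞) f) (v : E) :
    ContDiff ℝ (⊤ : ℕ∞) (fun p => fderiv ℝ f p v) :=
  (hf.fderiv_right (by simp)).clm_apply contDiff_const

lemma dapply_comm {f : E → ℝ} (hf : ContDiff ℝ (⊤ : ℕ∞) f) (v w : E) (p : E) :
    fderiv ℝ (fun q => fderiv ℝ f q v) p w = fderiv ℝ (fun q => fderiv ℝ f q w) p v := by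
  have hf' : ContDiff ℝ (⊤ : ℕ∞) (fderiv ℝ f) := hf.fderiv_right (by simp)
  have hd : ∀ y, HasFDerivAt f (fderiv ℝ f y) y := fun y =>
    (hf.differentiable (by simp) y).hasFDerivAt
  have hd2 : HasFDerivAt (fderiv ℝ f) (fderiv ℝ (fderiv ℝ f) p) p :=
    (hf'.differentiable (by simp) p).hasFDerivAt
  have hsymm := second_derivative_symmetric hd hd2
  have key : ∀ z : E, HasFDerivAt (fun q => fderiv ℝ f q z)
      ((fderiv ℝ (fderiv ℝ f) p).flip z) p := by
    intro z
    have := hd2.clm_apply (hasFDerivAt_const z p)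
    simpa using this
  rw [(key v).fderiv, (key w).fderiv]
  simpa using hsymm w v

lemma dapply_add {f g : E → ℝ} {p : E} (hf : DifferentiableAt ℝ f p)
    (hg : DifferentiableAt ℝ g p) (v : E) :
    fderiv ℝ (fun q => f q + g q) p v = fderiv ℝ f p v + fderiv ℝ g p v := by
  rw [fderiv_fun_add hf hg]; rfl

lemma dapply_sum {ι : Type*} {s : Finset ι} {F : ι → E → ℝ} {p : E}
    (h : ∀ i ∈ s, DifferentiableAt ℝ (F i) p) (v : E) :
    fderiv ℝ (fun q => ∑ i ∈ s, F i q) p v = ∑ i ∈ s, fderiv ℝ (F i) p v := by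
  rw [fderiv_fun_sum h]; simp

lemma dapply_mul {f g : E → ℝ} {p : E} (hf : DifferentiableAt ℝ f p)
    (hg : DifferentiableAt ℝ g p) (v : E) :
    fderiv ℝ (fun q => f q * g q) p v = f p * fderiv ℝ g p v + g p * fderiv ℝ f p v := by
  rw [fderiv_fun_mul hf hg]; simp [smul_eq_mul]

lemma dapply_neg {f : E → ℝ} {p : E} (v : E) :
    fderiv ℝ (fun q => -(f q)) p v = -(fderiv ℝ f p v) := by
  rw [fderiv_fun_neg]; rfl

lemma dapply_zero_of {f : E → ℝ} (h : ∀ q, f q = 0) (p v : E) :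
    fderiv ℝ f p v = 0 := by
  have : f = fun _ => (0 : ℝ) := funext h
  rw [this, fderiv_fun_const]
  rfl

end helpers

/-- Partial derivative in time of a function on `ℝ × ℝ^d`. -/
noncomputable def pdt {d : ℕ} (f : ℝ × (Fin d → ℝ) → ℝ) (p : ℝ × (Fin d → ℝ)) : ℝ :=
  fderiv ℝ f p (1, 0)

/-- Partial derivative in the `j`-th spatial coordinate of a function on `ℝ × ℝ^d`. -/
noncomputable def pdx {d : ℕ} (j : Fin d) (f : ℝ × (Fin d → ℝ) → ℝ) (p : ℝ × (Fin d → ℝ)) : ℝ :=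
  fderiv ℝ f p (0, Pi.single j 1)

lemma pdt_zero_of {d : ℕ} {f : ℝ × (Fin d → ℝ) → ℝ} (h : ∀ q, f q = 0)
    (p : ℝ × (Fin d → ℝ)) : pdt f p = 0 :=
  dapply_zero_of h p _

lemma pdx_zero_of {d : ℕ} {f : ℝ × (Fin d → ℝ) → ℝ} (h : ∀ q, f q = 0) (j : Fin d)
    (p : ℝ × (Fin d → ℝ)) : pdx j f p = 0 :=
  dapply_zero_of h p _

lemma pdt_neg {d : ℕ} (f : ℝ × (Fin d → ℝ) → ℝ) (p : ℝ × (Fin d → ℝ)) :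
    pdt (fun q => -(f q)) p = -(pdt f p) :=
  dapply_neg _

lemma pdx_neg {d : ℕ} (f : ℝ × (Fin d → ℝ) → ℝ) (j : Fin d) (p : ℝ × (Fin d → ℝ)) :
    pdx j (fun q => -(f q)) p = -(pdx j f p) :=
  dapply_neg _

/-- Real Schur flow: with 1-based indices `J = j+1`, `K = k+1`, we have `∂_J u_K = 0`
whenever `J > 2⌈K/2⌉`; here `⌈K/2⌉ = (K+1)/2` in natural-number division. -/
def IsRSF {d : ℕ} (u : Fin d → ℝ × (Fin d → ℝ) → ℝ) : Prop :=
  ∀ j k : Fin d, 2 * (((k : ℕ) + 1 + 1) / 2) < (j : ℕ) + 1 → ∀ p, pdx j (u k) p = 0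

/-- for odd `d ≥ 3` and a real Schur flow solving the barotropic Euler
equation, the last vorticity component `Ω_last = d(u_d dx_d)`, with `(Ω_last)_{jd} = ∂_j u_d`
for `j < d` and vanishing entries when both indices are `< d`, is Lie-transported by `u`. -/
theorem rsf_last_component_lie_transport
    {d : ℕ} (hd : 3 ≤ d) (hodd : Odd d)
    (u : Fin d → ℝ × (Fin d → ℝ) → ℝ) (P : ℝ × (Fin d → ℝ) → ℝ)
    (hu : ∀ k, ContDiff ℝ (⊤ : ℕ∞) (u k)) (hP : ContDiff ℝ (⊤ : ℕ∞) P)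
    (hRSF : IsRSF u)
    (heuler : ∀ k p, pdt (u k) p + ∑ j, u j p * pdx j (u k) p = -(pdx k P p))
    (L : Fin d) (hL : (L : ℕ) = d - 1)
    (Ω : Fin d → Fin d → ℝ × (Fin d → ℝ) → ℝ)
    (hΩ₁ : ∀ j : Fin d, j ≠ L → ∀ p, Ω j L p = pdx j (u L) p)
    (hΩ₂ : ∀ j : Fin d, j ≠ L → ∀ p, Ω L j p = -(pdx j (u L) p))
    (hΩ₃ : ∀ j k : Fin d, j ≠ L → k ≠ L → ∀ p, Ω j k p = 0)
    (hΩ₄ : ∀ p, Ω L L p = 0) :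
    ∀ j k p, pdt (Ω j k) p
      + ∑ m, (u m p * pdx m (Ω j k) p + Ω m k p * pdx j (u m) p + Ω j m p * pdx k (u m) p)
      = 0 := by
  -- differentiability basics
  have hud : ∀ k p, DifferentiableAt ℝ (u k) p := fun k p =>
    (hu k).differentiable (by simp) p
  have hupdx : ∀ j k, ContDiff ℝ (⊤ : ℕ∞) (pdx j (u k)) := fun j k =>
    contDiff_dapply (hu k) _
  have hDpdx : ∀ j k p, DifferentiableAt ℝ (pdx j (u k)) p := fun j k p =>
    (hupdx j k).differentiable (by simp) p
  have hDpdt : ∀ k p, DifferentiableAt ℝ (pdt (u k)) p := fun k p =>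
    ((contDiff_dapply (hu k) (1, 0)).differentiable (by simp) p)
  -- commutation of derivatives
  have hcomm_xx : ∀ (f : ℝ × (Fin d → ℝ) → ℝ), ContDiff ℝ (⊤ : ℕ∞) f →
      ∀ (j m : Fin d) p, pdx j (pdx m f) p = pdx m (pdx j f) p := by
    intro f hf j m p
    exact dapply_comm hf _ _ p
  have hcomm_xt : ∀ (f : ℝ × (Fin d → ℝ) → ℝ), ContDiff ℝ (⊤ : ℕ∞) f →
      ∀ (j : Fin d) p, pdx j (pdt f) p = pdt (pdx j f) p := by
    intro f hf j p
    exact dapply_comm hf _ _ p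
  -- RSF consequence: ∂_L u_m = 0 for m ≠ L
  have hzL : ∀ m : Fin d, m ≠ L → ∀ p, pdx L (u m) p = 0 := by
    intro m hm p
    apply hRSF L m _ p
    have hm' : (m : ℕ) ≠ (L : ℕ) := fun h => hm (Fin.ext h)
    have hmlt : (m : ℕ) < d := m.isLt
    obtain ⟨t, ht⟩ := hodd
    omega
  -- differentiated Euler equation (in direction `l`)
  have hED : ∀ (k l : Fin d) (p : ℝ × (Fin d → ℝ)),
      pdx l (pdt (u k)) p
        + ∑ m, (u m p * pdx l (pdx m (u k)) p + pdx m (u k) p * pdx l (u m) p)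
        = -(pdx l (pdx k P) p) := by
    intro k l p
    set v : ℝ × (Fin d → ℝ) := (0, Pi.single l 1) with hv
    have heq : (fun q => pdt (u k) q + ∑ m, u m q * pdx m (u k) q)
        = (fun q => -(pdx k P q)) := funext (heuler k)
    have hcong : fderiv ℝ (fun q => pdt (u k) q + ∑ m, u m q * pdx m (u k) q) p v
        = fderiv ℝ (fun q => -(pdx k P q)) p v := by rw [heq]
    have hsumdiff : DifferentiableAt ℝ (fun q => ∑ m, u m q * pdx m (u k) q) p :=
      DifferentiableAt.fun_sum fun m _ => (hud m p).fun_mul (hDpdx m k p)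
    have h1 : fderiv ℝ (fun q => pdt (u k) q + ∑ m, u m q * pdx m (u k) q) p v
        = fderiv ℝ (pdt (u k)) p v + ∑ m, fderiv ℝ (fun q => u m q * pdx m (u k) q) p v := by
      rw [dapply_add (hDpdt k p) hsumdiff v,
        dapply_sum (fun m _ => (hud m p).fun_mul (hDpdx m k p)) v]
    have h2 : ∀ m : Fin d, fderiv ℝ (fun q => u m q * pdx m (u k) q) p v
        = u m p * fderiv ℝ (pdx m (u k)) p v + pdx m (u k) p * fderiv ℝ (u m) p v :=
      fun m => dapply_mul (hud m p) (hDpdx m k p) v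
    rw [h1, Finset.sum_congr rfl (fun m _ => h2 m), dapply_neg v] at hcong
    exact hcong
  -- pressure cross-derivative vanishes: ∂_j ∂_L P = 0 for j ≠ L
  have hpress : ∀ j : Fin d, j ≠ L → ∀ p, pdx j (pdx L P) p = 0 := by
    intro j hj p
    have hzfun : pdx L (u j) = fun _ => (0 : ℝ) := funext (hzL j hj)
    have hmain := hED j L p
    have e1 : pdx L (pdt (u j)) p = 0 := by
      rw [hcomm_xt (u j) (hu j) L p, hzfun]
      exact pdt_zero_of (fun _ => rfl) p
    have e2 : ∀ m : Fin d,
        u m p * pdx L (pdx m (u j)) p + pdx m (u j) p * pdx L (u m) p = 0 := by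
      intro m
      have ha : pdx L (pdx m (u j)) p = 0 := by
        rw [hcomm_xx (u j) (hu j) L m p, hzfun]
        exact pdx_zero_of (fun _ => rfl) m p
      by_cases hm : m = L
      · rw [ha, hm, hzL j hj p]; ring
      · rw [ha, hzL m hm p]; ring
    rw [e1, Finset.sum_eq_zero (fun m _ => e2 m)] at hmain
    rw [hcomm_xx P hP j L p]
    linarith [hmain]
  -- key reduced identity: for i ≠ L,
  -- ∂_t ∂_i u_L + Σ_m (u_m ∂_m ∂_i u_L + ∂_m u_L ∂_i u_m) = 0
  have hkey : ∀ i : Fin d, i ≠ L → ∀ p,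
      pdt (pdx i (u L)) p
        + ∑ m, (u m p * pdx m (pdx i (u L)) p + pdx m (u L) p * pdx i (u m) p) = 0 := by
    intro i hi p
    have h := hED L i p
    rw [hcomm_xt (u L) (hu L) i p] at h
    have hsum : ∑ m, (u m p * pdx i (pdx m (u L)) p + pdx m (u L) p * pdx i (u m) p)
        = ∑ m, (u m p * pdx m (pdx i (u L)) p + pdx m (u L) p * pdx i (u m) p) :=
      Finset.sum_congr rfl (fun m _ => by rw [hcomm_xx (u L) (hu L) i m p])
    rw [hsum, hpress i hi p, neg_zero] at h
    exact h
  -- the main statement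
  intro j k p
  by_cases hj : j = L <;> by_cases hk : k = L
  · -- j = k = L
    rw [hj, hk]
    have hzfun : Ω L L = fun _ => (0 : ℝ) := funext hΩ₄
    have e0 : pdt (Ω L L) p = 0 := pdt_zero_of hΩ₄ p
    have esum : ∀ m : Fin d,
        u m p * pdx m (Ω L L) p + Ω m L p * pdx L (u m) p + Ω L m p * pdx L (u m) p = 0 := by
      intro m
      have hx : pdx m (Ω L L) p = 0 := pdx_zero_of hΩ₄ m p
      by_cases hm : m = L
      · rw [hx, hm, hΩ₄ p]; ring
      · rw [hx, hzL m hm p]; ring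
    rw [e0, Finset.sum_eq_zero (fun m _ => esum m)]
    ring
  · -- j = L, k ≠ L
    rw [hj]
    have hfun : Ω L k = fun q => -(pdx k (u L) q) := funext (hΩ₂ k hk)
    have e0 : pdt (Ω L k) p = -(pdt (pdx k (u L)) p) := by
      rw [hfun]; exact pdt_neg _ p
    have esum : ∀ m : Fin d,
        u m p * pdx m (Ω L k) p + Ω m k p * pdx L (u m) p + Ω L m p * pdx k (u m) p
        = -(u m p * pdx m (pdx k (u L)) p + pdx m (u L) p * pdx k (u m) p) := by
      intro m
      have hx : pdx m (Ω L k) p = -(pdx m (pdx k (u L)) p) := by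
        rw [hfun]; exact pdx_neg _ m p
      by_cases hm : m = L
      · rw [hx, hm, hΩ₂ k hk p, hΩ₄ p]; ring
      · rw [hx, hΩ₃ m k hm hk p, hΩ₂ m hm p, hzL m hm p]; ring
    rw [e0, Finset.sum_congr rfl (fun m _ => esum m), Finset.sum_neg_distrib]
    have := hkey k hk p
    linarith [this]
  · -- j ≠ L, k = L
    rw [hk]
    have hfun : Ω j L = pdx j (u L) := funext (hΩ₁ j hj)
    have e0 : pdt (Ω j L) p = pdt (pdx j (u L)) p := by rw [hfun]
    have esum : ∀ m : Fin d,
        u m p * pdx m (Ω j L) p + Ω m L p * pdx j (u m) p + Ω j m p * pdx L (u m) p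
        = u m p * pdx m (pdx j (u L)) p + pdx m (u L) p * pdx j (u m) p := by
      intro m
      have hx : pdx m (Ω j L) p = pdx m (pdx j (u L)) p := by rw [hfun]
      by_cases hm : m = L
      · rw [hx, hm, hΩ₄ p, hΩ₁ j hj p]; ring
      · rw [hx, hΩ₁ m hm p, hΩ₃ j m hj hm p, hzL m hm p]; ring
    rw [e0, Finset.sum_congr rfl (fun m _ => esum m)]
    exact hkey j hj p
  · -- j ≠ L, k ≠ L
    have hzfun : ∀ q, Ω j k q = 0 := hΩ₃ j k hj hk
    have e0 : pdt (Ω j k) p = 0 := pdt_zero_of hzfun p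
    have esum : ∀ m : Fin d,
        u m p * pdx m (Ω j k) p + Ω m k p * pdx j (u m) p + Ω j m p * pdx k (u m) p = 0 := by
      intro m
      have hx : pdx m (Ω j k) p = 0 := pdx_zero_of hzfun m p
      by_cases hm : m = L
      · rw [hx, hm, hΩ₂ k hk p, hΩ₁ j hj p]; ring
      · rw [hx, hΩ₃ m k hm hk p, hΩ₃ j m hj hm p]; ring
    rw [e0, Finset.sum_eq_zero (fun m _ => esum m)]
    ring
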